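/- Let (G,C) be a weighted DAG whose C*-separation relation violates Weak Transitivity in the sense that there exist distinct i,j,k and L with i ⊥ j | L and i ⊥ j | {k}∪L but neither i ⊥ k | L nor j ⊥ k | L. Concretely, in the diamond DAG 1→2, 1→3, 2→4, 3→4 with weights satisfying c₁₃ + c₃₄ > c₁₂ + c₂₄: the statements 1 ⊥ 4 | {3} and 1 ⊥ 4 | {2,3} hold, but neither 1 ⊥ 2 | {3} nor 2 ⊥ 4 | {3} holds. -/

import Mathlib

/-!  Common definitions: weighted DAGs, paths, critical paths,
critical DAGs and C*-separation, following Boege–Ferry–Hollering–Nowell,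
"Polyhedral aspects of maxoids". -/

variable {V : Type*}

/-- `p` is a directed path (vertex list) from `i` to `j` in the digraph `E`. -/
def IsPath (E : V → V → Prop) (i j : V) (p : List V) : Prop :=
  p.head? = some i ∧ p.getLast? = some j ∧ List.Chain' E p

/-- The weight of a path: the sum of the edge weights along consecutive vertices. -/
def pathWeight (c : V → V → ℝ) (p : List V) : ℝ :=
  ((p.zip p.tail).map fun q => c q.1 q.2).sum

/-- `p` is a critical (maximum-weight) path from `i` to `j`. -/
def IsCritical (E : V → V → Prop) (c : V → V → ℝ) (i j : V) (p : List V) : Prop :=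
  IsPath E i j p ∧ ∀ q, IsPath E i j q → pathWeight c q ≤ pathWeight c p

/-- The internal vertices of a path (all but the two endpoints). -/
def internalVerts (p : List V) : List V := p.tail.dropLast

/-- Edge `i → j` of the critical DAG `D*(C,L)`: there is a directed `i`–`j`
path in `G` and no critical `i`–`j` path has an internal vertex in `L`. -/
def critEdge (E : V → V → Prop) (c : V → V → ℝ) (L : Set V) (i j : V) : Prop :=
  (∃ p, IsPath E i j p) ∧
    ∀ p, IsCritical E c i j p → ∀ v ∈ internalVerts p, v ∉ L

/-- `i` and `j` are C*-connected given `L`: some path of one of the five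
permitted shapes joins them in the critical DAG `D*(C,L)` (colliders must lie
in `L`, non-colliders outside `L`, at most one collider). -/
def starConn (E : V → V → Prop) (c : V → V → ℝ) (L : Set V) (i j : V) : Prop :=
  let D := critEdge E c L
  D i j ∨ D j i ∨
  (∃ p, p ∉ L ∧ D p i ∧ D p j) ∨
  (∃ l, l ∈ L ∧ D i l ∧ D j l) ∨
  (∃ p l, p ∉ L ∧ l ∈ L ∧ D p i ∧ D p l ∧ D j l) ∨
  (∃ p l, p ∉ L ∧ l ∈ L ∧ D p j ∧ D p l ∧ D i l) ∨
  (∃ p q l, p ∉ L ∧ q ∉ L ∧ l ∈ L ∧ D p i ∧ D p l ∧ D q l ∧ D q j)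

/-- C*-separation of two vertices given `L`. -/
def CSep (E : V → V → Prop) (c : V → V → ℝ) (L : Set V) (i j : V) : Prop :=
  ¬ starConn E c L i j

/-- C*-connection of two sets of vertices given `L`. -/
def starConnSets (E : V → V → Prop) (c : V → V → ℝ) (L I J : Set V) : Prop :=
  ∃ i ∈ I, ∃ j ∈ J, starConn E c L i j

/-- C*-separation of two sets of vertices given `L`. -/
def CSepSets (E : V → V → Prop) (c : V → V → ℝ) (L I J : Set V) : Prop :=
  ¬ starConnSets E c L I J

/-- The digraph `E` is acyclic. -/
def IsAcyclic (E : V → V → Prop) : Prop := ∀ v, ¬ Relation.TransGen E v v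

/-- A weight matrix is generic: between any two vertices the maximum-weight
path is unique whenever one exists. -/
def Generic (E : V → V → Prop) (c : V → V → ℝ) : Prop :=
  ∀ i j p q, IsCritical E c i j p → IsCritical E c i j q → p = q

/-- The set of generic weight matrices inducing exactly the same critical
paths as `c`. -/
def sameCritSet (E : V → V → Prop) (c : V → V → ℝ) : Set (V → V → ℝ) :=
  {c' | Generic E c' ∧ ∀ i j p, IsCritical E c' i j p ↔ IsCritical E c i j p}

/-- The diamond DAG 1→2, 1→3, 2→4, 3→4 on vertices `Fin 4` (0-indexed). -/
def diamondE : Fin 4 → Fin 4 → Prop := fun a b =>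
  (a = 0 ∧ b = 1) ∨ (a = 0 ∧ b = 2) ∨ (a = 1 ∧ b = 3) ∨ (a = 2 ∧ b = 3)

section Aux

/-- Classification of all chains in the diamond DAG. -/
lemma diamond_chain_mem (p : List (Fin 4)) (hp : List.Chain' diamondE p) :
    p = [] ∨ p = [0] ∨ p = [1] ∨ p = [2] ∨ p = [3] ∨
    p = [0,1] ∨ p = [0,2] ∨ p = [1,3] ∨ p = [2,3] ∨
    p = [0,1,3] ∨ p = [0,2,3] := by
  match p with
  | [] => tauto
  | [a] => fin_cases a <;> simp
  | [a, b] =>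
    have hab : diamondE a b := (List.isChain_cons_cons.mp hp).1
    rcases hab with ⟨rfl, rfl⟩ | ⟨rfl, rfl⟩ | ⟨rfl, rfl⟩ | ⟨rfl, rfl⟩ <;> simp
  | [a, b, d] =>
    have hab : diamondE a b := (List.isChain_cons_cons.mp hp).1
    have hbd : diamondE b d := (List.isChain_cons_cons.mp (List.isChain_cons_cons.mp hp).2).1
    rcases hab with ⟨rfl, rfl⟩ | ⟨rfl, rfl⟩ | ⟨rfl, rfl⟩ | ⟨rfl, rfl⟩ <;>
      rcases hbd with ⟨h1, rfl⟩ | ⟨h1, rfl⟩ | ⟨h1, rfl⟩ | ⟨h1, rfl⟩ <;> simp_all <;>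
        exact absurd h1 (by decide)
  | a :: b :: d :: e :: t =>
    exfalso
    have hab : diamondE a b := (List.isChain_cons_cons.mp hp).1
    have hbd : diamondE b d := (List.isChain_cons_cons.mp (List.isChain_cons_cons.mp hp).2).1
    have hde : diamondE d e :=
      (List.isChain_cons_cons.mp (List.isChain_cons_cons.mp (List.isChain_cons_cons.mp hp).2).2).1
    rcases hab with ⟨rfl, rfl⟩ | ⟨rfl, rfl⟩ | ⟨rfl, rfl⟩ | ⟨rfl, rfl⟩ <;>
      rcases hbd with ⟨h1, rfl⟩ | ⟨h1, rfl⟩ | ⟨h1, rfl⟩ | ⟨h1, rfl⟩ <;>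
        rcases hde with ⟨h2, rfl⟩ | ⟨h2, rfl⟩ | ⟨h2, rfl⟩ | ⟨h2, rfl⟩ <;>
          first
          | exact absurd h1 (by decide)
          | exact absurd h2 (by decide)

lemma diamond_reach {i j : Fin 4} {p : List (Fin 4)} (h : IsPath diamondE i j p) :
    (i = 0 ∧ j = 1) ∨ (i = 0 ∧ j = 2) ∨ (i = 1 ∧ j = 3) ∨ (i = 2 ∧ j = 3) ∨
    (i = 0 ∧ j = 3) ∨ i = j := by
  obtain ⟨h1, h2, h3⟩ := h
  rcases diamond_chain_mem p h3 with rfl|rfl|rfl|rfl|rfl|rfl|rfl|rfl|rfl|rfl|rfl <;>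
    simp_all <;> tauto

lemma diamond_path01 {p : List (Fin 4)} (h : IsPath diamondE 0 1 p) : p = [0,1] := by
  obtain ⟨h1, h2, h3⟩ := h
  rcases diamond_chain_mem p h3 with rfl|rfl|rfl|rfl|rfl|rfl|rfl|rfl|rfl|rfl|rfl <;>
    simp_all

lemma diamond_path13 {p : List (Fin 4)} (h : IsPath diamondE 1 3 p) : p = [1,3] := by
  obtain ⟨h1, h2, h3⟩ := h
  rcases diamond_chain_mem p h3 with rfl|rfl|rfl|rfl|rfl|rfl|rfl|rfl|rfl|rfl|rfl <;>
    simp_all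

lemma diamond_path03 {p : List (Fin 4)} (h : IsPath diamondE 0 3 p) :
    p = [0,1,3] ∨ p = [0,2,3] := by
  obtain ⟨h1, h2, h3⟩ := h
  rcases diamond_chain_mem p h3 with rfl|rfl|rfl|rfl|rfl|rfl|rfl|rfl|rfl|rfl|rfl <;>
    simp_all

lemma isPath013 : IsPath diamondE (0:Fin 4) 3 [0,1,3] := by
  refine ⟨rfl, rfl, ?_⟩
  simp [List.Chain', List.isChain_cons_cons, diamondE]

lemma isPath023 : IsPath diamondE (0:Fin 4) 3 [0,2,3] := by
  refine ⟨rfl, rfl, ?_⟩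
  simp [List.Chain', List.isChain_cons_cons, diamondE]

lemma crit023 {c : Fin 4 → Fin 4 → ℝ} (h : c 0 1 + c 1 3 < c 0 2 + c 2 3) :
    IsCritical diamondE c 0 3 [0,2,3] := by
  refine ⟨isPath023, fun q hq => ?_⟩
  rcases diamond_path03 hq with rfl | rfl <;>
    simp [pathWeight] <;> linarith

lemma notD03 {c : Fin 4 → Fin 4 → ℝ} (h : c 0 1 + c 1 3 < c 0 2 + c 2 3)
    {L : Set (Fin 4)} (h2 : (2 : Fin 4) ∈ L) : ¬ critEdge diamondE c L 0 3 := by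
  rintro ⟨-, hcrit⟩
  exact hcrit [0,2,3] (crit023 h) 2 (by simp [internalVerts]) h2

lemma D01 {c : Fin 4 → Fin 4 → ℝ} {L : Set (Fin 4)} : critEdge diamondE c L 0 1 := by
  refine ⟨⟨[0,1], rfl, rfl, by simp [List.Chain', List.isChain_cons_cons, diamondE]⟩, fun p hp v hv => ?_⟩
  have := diamond_path01 hp.1
  subst this
  simp [internalVerts] at hv

lemma D13 {c : Fin 4 → Fin 4 → ℝ} {L : Set (Fin 4)} : critEdge diamondE c L 1 3 := by
  refine ⟨⟨[1,3], rfl, rfl, by simp [List.Chain', List.isChain_cons_cons, diamondE]⟩, fun p hp v hv => ?_⟩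
  have := diamond_path13 hp.1
  subst this
  simp [internalVerts] at hv

end Aux

/-- the diamond with `c₁₃ + c₃₄ > c₁₂ + c₂₄` violates Weak
Transitivity: `1 ⊥ 4 | {3}` and `1 ⊥ 4 | {2,3}` hold, but neither
`1 ⊥ 2 | {3}` nor `2 ⊥ 4 | {3}` holds (vertices 1,2,3,4 are `0,1,2,3`). -/
theorem stmt18 (c : Fin 4 → Fin 4 → ℝ)
    (h : c 0 1 + c 1 3 < c 0 2 + c 2 3) :
    CSep diamondE c ({2} : Set (Fin 4)) 0 3 ∧
    CSep diamondE c ({1, 2} : Set (Fin 4)) 0 3 ∧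
    ¬ CSep diamondE c ({2} : Set (Fin 4)) 0 1 ∧
    ¬ CSep diamondE c ({2} : Set (Fin 4)) 1 3 := by
  have hD2 := notD03 h (L := {2}) (by simp)
  have hD12 := notD03 h (L := {1, 2}) (by simp)
  refine ⟨?_, ?_, ?_, ?_⟩
  · rintro (hd | hd | ⟨p, hpL, hp0, hp3⟩ | ⟨l, hl, h0l, h3l⟩ |
      ⟨p, l, hpL, hl, hp0, hpl, h3l⟩ | ⟨p, l, hpL, hl, hp3, hpl, h0l⟩ |
      ⟨p, q, l, hpL, hqL, hl, hp0, hpl, hql, hq3⟩)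
    · exact hD2 hd
    · obtain ⟨q, hq⟩ := hd.1
      rcases diamond_reach hq with ⟨h1,h2⟩|⟨h1,h2⟩|⟨h1,h2⟩|⟨h1,h2⟩|⟨h1,h2⟩|h1 <;>
        first
        | exact absurd h1 (by decide)
        | exact absurd h2 (by decide)
        | simp_all
    · obtain ⟨q, hq⟩ := hp0.1
      rcases diamond_reach hq with ⟨h1,h2⟩|⟨h1,h2⟩|⟨h1,h2⟩|⟨h1,h2⟩|⟨h1,h2⟩|h1 <;>
        first
        | exact absurd h1 (by decide)
        | exact absurd h2 (by decide)
        | simp_all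
    · obtain rfl : l = 2 := hl
      obtain ⟨q, hq⟩ := h3l.1
      rcases diamond_reach hq with ⟨h1,h2⟩|⟨h1,h2⟩|⟨h1,h2⟩|⟨h1,h2⟩|⟨h1,h2⟩|h1 <;>
        first
        | exact absurd h1 (by decide)
        | exact absurd h2 (by decide)
        | simp_all
    · obtain rfl : l = 2 := hl
      obtain ⟨q, hq⟩ := h3l.1
      rcases diamond_reach hq with ⟨h1,h2⟩|⟨h1,h2⟩|⟨h1,h2⟩|⟨h1,h2⟩|⟨h1,h2⟩|h1 <;>
        first
        | exact absurd h1 (by decide)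
        | exact absurd h2 (by decide)
        | simp_all
    · obtain rfl : l = 2 := hl
      obtain ⟨q, hq⟩ := hpl.1
      have hp0 : p = 0 := by
        rcases diamond_reach hq with ⟨h1,h2⟩|⟨h1,h2⟩|⟨h1,h2⟩|⟨h1,h2⟩|⟨h1,h2⟩|h1 <;>
          first
        | exact absurd h1 (by decide)
        | exact absurd h2 (by decide)
        | simp_all
      subst hp0
      exact hD2 hp3
    · obtain rfl : l = 2 := hl
      obtain ⟨r, hr⟩ := hql.1
      have hq0 : q = 0 := by
        rcases diamond_reach hr with ⟨h1,h2⟩|⟨h1,h2⟩|⟨h1,h2⟩|⟨h1,h2⟩|⟨h1,h2⟩|h1 <;>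
          first
        | exact absurd h1 (by decide)
        | exact absurd h2 (by decide)
        | simp_all
      subst hq0
      exact hD2 hq3
  · rintro (hd | hd | ⟨p, hpL, hp0, hp3⟩ | ⟨l, hl, h0l, h3l⟩ |
      ⟨p, l, hpL, hl, hp0, hpl, h3l⟩ | ⟨p, l, hpL, hl, hp3, hpl, h0l⟩ |
      ⟨p, q, l, hpL, hqL, hl, hp0, hpl, hql, hq3⟩)
    · exact hD12 hd
    · obtain ⟨q, hq⟩ := hd.1
      rcases diamond_reach hq with ⟨h1,h2⟩|⟨h1,h2⟩|⟨h1,h2⟩|⟨h1,h2⟩|⟨h1,h2⟩|h1 <;>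
        first
        | exact absurd h1 (by decide)
        | exact absurd h2 (by decide)
        | simp_all
    · obtain ⟨q, hq⟩ := hp0.1
      rcases diamond_reach hq with ⟨h1,h2⟩|⟨h1,h2⟩|⟨h1,h2⟩|⟨h1,h2⟩|⟨h1,h2⟩|h1 <;>
        first
        | exact absurd h1 (by decide)
        | exact absurd h2 (by decide)
        | simp_all
    · obtain ⟨q, hq⟩ := h3l.1
      rcases hl with rfl | rfl <;>
        rcases diamond_reach hq with ⟨h1,h2⟩|⟨h1,h2⟩|⟨h1,h2⟩|⟨h1,h2⟩|⟨h1,h2⟩|h1 <;>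
          first
        | exact absurd h1 (by decide)
        | exact absurd h2 (by decide)
        | simp_all
    · obtain ⟨q, hq⟩ := h3l.1
      rcases hl with rfl | rfl <;>
        rcases diamond_reach hq with ⟨h1,h2⟩|⟨h1,h2⟩|⟨h1,h2⟩|⟨h1,h2⟩|⟨h1,h2⟩|h1 <;>
          first
        | exact absurd h1 (by decide)
        | exact absurd h2 (by decide)
        | simp_all
    · obtain ⟨q, hq⟩ := hpl.1
      have hp0 : p = 0 := by
        rcases hl with rfl | rfl <;>
          rcases diamond_reach hq with ⟨h1,h2⟩|⟨h1,h2⟩|⟨h1,h2⟩|⟨h1,h2⟩|⟨h1,h2⟩|h1 <;>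
            first
        | exact absurd h1 (by decide)
        | exact absurd h2 (by decide)
        | simp_all
      subst hp0
      exact hD12 hp3
    · obtain ⟨r, hr⟩ := hql.1
      have hq0 : q = 0 := by
        rcases hl with rfl | rfl <;>
          rcases diamond_reach hr with ⟨h1,h2⟩|⟨h1,h2⟩|⟨h1,h2⟩|⟨h1,h2⟩|⟨h1,h2⟩|h1 <;>
            first
        | exact absurd h1 (by decide)
        | exact absurd h2 (by decide)
        | simp_all
      subst hq0
      exact hD12 hq3
  · intro hc
    exact hc (Or.inl D01)
  · intro hc
    exact hc (Or.inl D13)
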